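/- For every even j with 2 ≤ j ≤ d−1 and m > 0, the inequality (1 − j/d)^{2m(d−j)} (1 − (j−1)/d)^{2mj} C(d−1, j) ≤ exp(−2mj(1 − 1/d) + j·log d)/j! holds, and consequently, with m = (log d + c)/2 and c > 0, the sum of these terms over even j is at most Σ_{j≥1} e^{−cj(1−1/d) + 2}/j!, a quantity tending to 0 as c → ∞ uniformly in d ≥ 2. -/

import Mathlib

open Finset Real

/-- The term of `Σ_I` indexed by even `j`, with `2m` in the exponents. -/
noncomputable def sigmaITerm (d j : ℕ) (m : ℝ) : ℝ :=
  (1 - (j : ℝ) / d) ^ (2 * m * ((d : ℝ) - j)) *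
    (1 - ((j : ℝ) - 1) / d) ^ (2 * m * j) * (Nat.choose (d - 1) j : ℝ)

/-- `(1-x)^y ≤ exp(-x*y)` for `0 ≤ x ≤ 1`, `0 ≤ y`. -/
lemma one_sub_rpow_le_exp {x y : ℝ} (hx0 : 0 ≤ x) (hx1 : x ≤ 1) (hy : 0 ≤ y) :
    (1 - x) ^ y ≤ Real.exp (-x * y) := by
  have h1 : (1 - x) ≤ Real.exp (-x) := by
    have := Real.add_one_le_exp (-x); linarith
  calc (1 - x) ^ y ≤ (Real.exp (-x)) ^ y :=
        Real.rpow_le_rpow (by linarith) h1 hy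
    _ = Real.exp (-x * y) := (Real.exp_mul _ _).symm

/-- Core bound: the two power factors are at most `exp(-2mj(1-1/d))`. -/
lemma sigmaITerm_le_core (d j : ℕ) (m : ℝ) (hm : 0 ≤ m) (hj2 : 2 ≤ j)
    (hjd : j ≤ d - 1) :
    sigmaITerm d j m ≤
      Real.exp (-(2 * m * j * (1 - 1 / d))) * (Nat.choose (d - 1) j : ℝ) := by
  have hd3 : 3 ≤ d := by omega
  have hjd' : (j : ℝ) + 1 ≤ (d : ℝ) := by exact_mod_cast (by omega : j + 1 ≤ d)
  have hD : (3 : ℝ) ≤ (d : ℝ) := by exact_mod_cast hd3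
  have hJ : (2 : ℝ) ≤ (j : ℝ) := by exact_mod_cast hj2
  have hDpos : (0 : ℝ) < d := by linarith
  have hx1 : (0 : ℝ) ≤ (j : ℝ) / d := by positivity
  have hx1' : (j : ℝ) / d ≤ 1 := by rw [div_le_one hDpos]; linarith
  have hx2 : (0 : ℝ) ≤ ((j : ℝ) - 1) / d := by
    apply div_nonneg (by linarith) hDpos.le
  have hx2' : ((j : ℝ) - 1) / d ≤ 1 := by rw [div_le_one hDpos]; linarith
  have hy1 : (0 : ℝ) ≤ 2 * m * ((d : ℝ) - j) := by
    apply mul_nonneg (by linarith) (by linarith)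
  have hy2 : (0 : ℝ) ≤ 2 * m * (j : ℝ) := by positivity
  have hA := one_sub_rpow_le_exp hx1 hx1' hy1
  have hB := one_sub_rpow_le_exp hx2 hx2' hy2
  have hApos : (0 : ℝ) ≤ (1 - (j : ℝ) / d) ^ (2 * m * ((d : ℝ) - j)) :=
    Real.rpow_nonneg (by linarith) _
  have hBpos : (0 : ℝ) ≤ (1 - ((j : ℝ) - 1) / d) ^ (2 * m * j) :=
    Real.rpow_nonneg (by linarith) _
  have hC : (0 : ℝ) ≤ (Nat.choose (d - 1) j : ℝ) := Nat.cast_nonneg _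
  have hAB : (1 - (j : ℝ) / d) ^ (2 * m * ((d : ℝ) - j)) *
      (1 - ((j : ℝ) - 1) / d) ^ (2 * m * j) ≤
      Real.exp (-(2 * m * j * (1 - 1 / d))) := by
    calc (1 - (j : ℝ) / d) ^ (2 * m * ((d : ℝ) - j)) *
        (1 - ((j : ℝ) - 1) / d) ^ (2 * m * j)
        ≤ Real.exp (-((j : ℝ) / d) * (2 * m * ((d : ℝ) - j))) *
          Real.exp (-(((j : ℝ) - 1) / d) * (2 * m * j)) := by
          apply mul_le_mul hA hB hBpos (Real.exp_pos _).le
      _ = Real.exp (-((j : ℝ) / d) * (2 * m * ((d : ℝ) - j)) +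
          -(((j : ℝ) - 1) / d) * (2 * m * j)) := (Real.exp_add _ _).symm
      _ = Real.exp (-(2 * m * j * (1 - 1 / d))) := by
          congr 1; field_simp; ring
  calc sigmaITerm d j m ≤
      Real.exp (-(2 * m * j * (1 - 1 / d))) * (Nat.choose (d - 1) j : ℝ) := by
        unfold sigmaITerm
        exact mul_le_mul_of_nonneg_right hAB hC

/-- `∑_{i<n} (i+1) = n(n+1)/2` over the reals. -/
lemma sum_range_succ_cast (n : ℕ) :
    ∑ i ∈ Finset.range n, ((i : ℝ) + 1) = n * (n + 1) / 2 := by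
  induction n with
  | zero => simp
  | succ n ih => rw [Finset.sum_range_succ, ih]; push_cast; ring

/-- The descending factorial bound with the `e^2` slack. -/
lemma descFactorial_bound (d j : ℕ) (hj2 : 2 ≤ j) (hjd : j ≤ d - 1) :
    ((d - 1).descFactorial j : ℝ) ≤
      Real.exp 2 * Real.exp ((j : ℝ) * (1 - 1 / d) * Real.log d) := by
  have hd3 : 3 ≤ d := by omega
  have hDpos : (0 : ℝ) < d := by positivity
  have hD1 : (1 : ℝ) ≤ d := by exact_mod_cast (by omega : 1 ≤ d)
  -- each factor bound
  have hfac : ∀ i ∈ Finset.range j, ((d - 1 - i : ℕ) : ℝ) ≤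
      (d : ℝ) * Real.exp (-(((i : ℝ) + 1) / d)) := by
    intro i hi
    have hi' : i < j := Finset.mem_range.mp hi
    have hcast : ((d - 1 - i : ℕ) : ℝ) = (d : ℝ) - 1 - i := by
      have h1 : i ≤ d - 1 := by omega
      have h2 : 1 ≤ d := by omega
      push_cast [Nat.cast_sub h1, Nat.cast_sub h2]; ring
    rw [hcast]
    have hx0 : (0 : ℝ) ≤ ((i : ℝ) + 1) / d := by positivity
    have hx1 : ((i : ℝ) + 1) / d ≤ 1 := by
      rw [div_le_one hDpos]
      exact_mod_cast (by omega : i + 1 ≤ d)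
    have h1 : (1 : ℝ) - ((i : ℝ) + 1) / d ≤ Real.exp (-(((i : ℝ) + 1) / d)) := by
      have := Real.add_one_le_exp (-(((i : ℝ) + 1) / d)); linarith
    have heq : (d : ℝ) - 1 - i = (d : ℝ) * (1 - ((i : ℝ) + 1) / d) := by
      field_simp
      ring
    rw [heq]
    exact mul_le_mul_of_nonneg_left h1 hDpos.le
  have hprod : ((d - 1).descFactorial j : ℝ) ≤
      (d : ℝ) ^ j * Real.exp (-(((j : ℝ) * (j + 1) / 2) / d)) := by
    rw [Nat.descFactorial_eq_prod_range]
    push_cast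
    calc (∏ i ∈ Finset.range j, ((d - 1 - i : ℕ) : ℝ))
        ≤ ∏ i ∈ Finset.range j, ((d : ℝ) * Real.exp (-(((i : ℝ) + 1) / d))) := by
          apply Finset.prod_le_prod (fun i _ => Nat.cast_nonneg _) hfac
      _ = (d : ℝ) ^ j * Real.exp (∑ i ∈ Finset.range j, (-(((i : ℝ) + 1) / d))) := by
          rw [Finset.prod_mul_distrib, Finset.prod_const, Real.exp_sum,
            Finset.card_range]
      _ = (d : ℝ) ^ j * Real.exp (-(((j : ℝ) * (j + 1) / 2) / d)) := by
          congr 1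
          rw [Finset.sum_neg_distrib, ← Finset.sum_div, sum_range_succ_cast]
  have hpow : (d : ℝ) ^ j = Real.exp ((j : ℝ) * Real.log d) := by
    rw [← Real.exp_log hDpos, ← Real.exp_nat_mul, Real.log_exp]
  have hJ2 : (2 : ℝ) ≤ (j : ℝ) := by exact_mod_cast hj2
  set L := Real.log d with hLdef
  set s := Real.sqrt d with hs
  have hs2 : s ^ 2 = (d : ℝ) := Real.sq_sqrt hDpos.le
  have hs1 : (1 : ℝ) ≤ s := by
    rw [hs, show (1:ℝ) = Real.sqrt 1 by simp]
    exact Real.sqrt_le_sqrt hD1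
  have hLs : L ≤ 2 * s - 2 := by
    have h1 : Real.log s ≤ s - 1 := Real.log_le_sub_one_of_pos (by linarith)
    have h2 : Real.log s = L / 2 := by rw [hs, Real.log_sqrt hDpos.le]
    rw [h2] at h1; linarith
  have hL0 : 0 ≤ L := Real.log_nonneg hD1
  have hkey : (j : ℝ) * L - (j : ℝ) * ((j : ℝ) + 1) / 2 ≤ 2 * d := by
    nlinarith [sq_nonneg ((j : ℝ) - L), sq_nonneg (s - 1)]
  have ht : (0 : ℝ) < 1 / d := by positivity
  have hdt : (d : ℝ) * (1 / d) = 1 := by field_simp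
  have hmul := mul_le_mul_of_nonneg_right hkey ht.le
  calc ((d - 1).descFactorial j : ℝ)
      ≤ (d : ℝ) ^ j * Real.exp (-(((j : ℝ) * (j + 1) / 2) / d)) := hprod
    _ = Real.exp ((j : ℝ) * L + -(((j : ℝ) * (j + 1) / 2) / d)) := by
        rw [hpow, ← Real.exp_add]
    _ ≤ Real.exp (2 + (j : ℝ) * (1 - 1 / d) * L) := by
        apply Real.exp_le_exp.mpr
        have e1 : ((j : ℝ) * ((j : ℝ) + 1) / 2) / d =
            ((j : ℝ) * ((j : ℝ) + 1) / 2) * (1 / d) := by ring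
        have e2 : (j : ℝ) * (1 - 1 / d) * L = (j : ℝ) * L - (j : ℝ) * (1 / d) * L := by
          ring
        rw [e1, e2]
        nlinarith [hmul, hdt]
    _ = Real.exp 2 * Real.exp ((j : ℝ) * (1 - 1 / d) * L) := Real.exp_add _ _

/-- Pointwise bound for part 2. -/
lemma sigmaITerm_le_part2 (d j : ℕ) (c : ℝ) (hc : 0 < c) (hj2 : 2 ≤ j)
    (hjd : j ≤ d - 1) :
    sigmaITerm d j ((Real.log d + c) / 2) ≤
      Real.exp (-(c * j * (1 - 1 / d)) + 2) / (Nat.factorial j) := by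
  have hd3 : 3 ≤ d := by omega
  have hDpos : (0 : ℝ) < d := by positivity
  have hD1 : (1 : ℝ) ≤ d := by exact_mod_cast (by omega : 1 ≤ d)
  have hL0 : 0 ≤ Real.log d := Real.log_nonneg hD1
  have hm : 0 ≤ (Real.log d + c) / 2 := by linarith
  have hcore := sigmaITerm_le_core d j _ hm hj2 hjd
  have hchoose : (Nat.choose (d - 1) j : ℝ) =
      ((d - 1).descFactorial j : ℝ) / (Nat.factorial j : ℝ) := by
    rw [Nat.descFactorial_eq_factorial_mul_choose]
    push_cast
    field_simp
  have hdesc := descFactorial_bound d j hj2 hjd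
  have hfac_pos : (0 : ℝ) < (Nat.factorial j : ℝ) := by
    exact_mod_cast j.factorial_pos
  calc sigmaITerm d j ((Real.log d + c) / 2)
      ≤ Real.exp (-(2 * ((Real.log d + c) / 2) * j * (1 - 1 / d))) *
        (Nat.choose (d - 1) j : ℝ) := hcore
    _ = Real.exp (-((Real.log d + c) * j * (1 - 1 / d))) *
        (((d - 1).descFactorial j : ℝ) / (Nat.factorial j : ℝ)) := by
        rw [hchoose]; ring_nf
    _ ≤ Real.exp (-((Real.log d + c) * j * (1 - 1 / d))) *
        ((Real.exp 2 * Real.exp ((j : ℝ) * (1 - 1 / d) * Real.log d)) /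
          (Nat.factorial j : ℝ)) := by
        gcongr
    _ = Real.exp (-(c * j * (1 - 1 / d)) + 2) / (Nat.factorial j) := by
        rw [div_eq_mul_inv, div_eq_mul_inv, ← mul_assoc, ← Real.exp_add,
          ← Real.exp_add]
        congr 2
        ring

/-- `2^k ≤ (k+1)!`. -/
lemma two_pow_le_fact (k : ℕ) : 2 ^ k ≤ (k + 1).factorial := by
  induction k with
  | zero => simp
  | succ k ih =>
    rw [pow_succ, Nat.factorial_succ]
    calc 2 ^ k * 2 ≤ (k + 1).factorial * 2 := by omega
      _ ≤ (k + 1).factorial * (k + 2) := by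
          apply Nat.mul_le_mul_left; omega
      _ = (k + 2) * (k + 1).factorial := by ring

/-- Part 2 as a standalone lemma. -/
lemma sum_sigmaI_le_tsum (d : ℕ) (hd2 : 2 ≤ d) (c : ℝ) (hc : 0 < c) :
    ∑ j ∈ (Finset.Icc 2 (d - 1)).filter (fun j => Even j),
        sigmaITerm d j ((Real.log d + c) / 2) ≤
      ∑' j : ℕ, Real.exp (-(c * (j + 1) * (1 - 1 / d)) + 2) / (Nat.factorial (j + 1)) := by
  have hD2 : (2 : ℝ) ≤ (d : ℝ) := by exact_mod_cast hd2
  have hd_inv : (1 : ℝ) / d ≤ 1 / 2 := by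
    apply one_div_le_one_div_of_le <;> linarith
  set f : ℕ → ℝ :=
    fun k => Real.exp (-(c * (k + 1) * (1 - 1 / d)) + 2) / (Nat.factorial (k + 1)) with hf
  have hf_nonneg : ∀ k, 0 ≤ f k := fun k => by positivity
  have hf_le : ∀ k, f k ≤ Real.exp 2 * (1 / 2 : ℝ) ^ k := by
    intro k
    have h1 : Real.exp (-(c * (k + 1) * (1 - 1 / d)) + 2) ≤ Real.exp 2 := by
      apply Real.exp_le_exp.mpr
      have : 0 ≤ c * (k + 1) * (1 - 1 / d) := by
        apply mul_nonneg (by positivity); linarith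
      linarith
    have h2 : ((2 : ℝ)) ^ k ≤ (Nat.factorial (k + 1) : ℝ) := by
      exact_mod_cast two_pow_le_fact k
    have h3 : (1 : ℝ) / (Nat.factorial (k + 1)) ≤ (1 / 2 : ℝ) ^ k := by
      rw [div_pow, one_pow]
      apply one_div_le_one_div_of_le (by positivity) h2
    calc f k = Real.exp (-(c * (k + 1) * (1 - 1 / d)) + 2) *
          (1 / (Nat.factorial (k + 1) : ℝ)) := by rw [hf]; ring
      _ ≤ Real.exp 2 * (1 / 2 : ℝ) ^ k := by
          apply mul_le_mul h1 h3 (by positivity) (Real.exp_pos _).le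
  have hgeo : Summable (fun k : ℕ => Real.exp 2 * (1 / 2 : ℝ) ^ k) :=
    (summable_geometric_of_lt_one (by norm_num) (by norm_num)).mul_left _
  have hf_sum : Summable f := Summable.of_nonneg_of_le hf_nonneg hf_le hgeo
  set S := (Finset.Icc 2 (d - 1)).filter (fun j => Even j) with hS
  have hmem : ∀ j ∈ S, 2 ≤ j ∧ j ≤ d - 1 := by
    intro j hj
    simp only [hS, Finset.mem_filter, Finset.mem_Icc] at hj
    exact ⟨hj.1.1, hj.1.2⟩
  calc ∑ j ∈ S, sigmaITerm d j ((Real.log d + c) / 2)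
      ≤ ∑ j ∈ S, f (j - 1) := by
        apply Finset.sum_le_sum
        intro j hj
        obtain ⟨hj2, hjd⟩ := hmem j hj
        have hj1 : j - 1 + 1 = j := by omega
        have hcast : ((j - 1 : ℕ) : ℝ) + 1 = (j : ℝ) := by
          have : ((j - 1 + 1 : ℕ) : ℝ) = (j : ℝ) := by rw [hj1]
          push_cast at this
          linarith
        have := sigmaITerm_le_part2 d j c hc hj2 hjd
        rw [hf]
        simp only [hj1, hcast]
        exact this
    _ = ∑ k ∈ S.image (· - 1), f k := by
        rw [Finset.sum_image]
        intro x hx y hy hxy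
        have h2x := (hmem x hx).1
        have h2y := (hmem y hy).1
        dsimp only at hxy
        omega
    _ ≤ ∑' k, f k := hf_sum.sum_le_tsum _ (fun k _ => hf_nonneg k)

theorem sigmaI_bound :
    (∀ d j : ℕ, ∀ m : ℝ, 0 < m → Even j → 2 ≤ j → j ≤ d - 1 →
      sigmaITerm d j m ≤
        Real.exp (-(2 * m * j * (1 - 1 / d)) + j * Real.log d) / (Nat.factorial j)) ∧
    (∀ d : ℕ, 2 ≤ d → ∀ c : ℝ, 0 < c →
      ∑ j ∈ (Finset.Icc 2 (d - 1)).filter (fun j => Even j),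
          sigmaITerm d j ((Real.log d + c) / 2) ≤
        ∑' j : ℕ, Real.exp (-(c * (j + 1) * (1 - 1 / d)) + 2) / (Nat.factorial (j + 1))) ∧
    (∀ ε : ℝ, 0 < ε → ∃ c₀ : ℝ, ∀ c : ℝ, c₀ ≤ c → ∀ d : ℕ, 2 ≤ d →
      ∑ j ∈ (Finset.Icc 2 (d - 1)).filter (fun j => Even j),
          sigmaITerm d j ((Real.log d + c) / 2) ≤ ε) := by
  refine ⟨?_, fun d hd2 c hc => sum_sigmaI_le_tsum d hd2 c hc, ?_⟩
  · intro d j m hm _ hj2 hjd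
    have hd3 : 3 ≤ d := by omega
    have hDpos : (0 : ℝ) < d := by positivity
    have hcore := sigmaITerm_le_core d j m hm.le hj2 hjd
    have hC : (Nat.choose (d - 1) j : ℝ) ≤ (d : ℝ) ^ j / (Nat.factorial j) := by
      calc (Nat.choose (d - 1) j : ℝ) ≤ ((d - 1 : ℕ) : ℝ) ^ j / (Nat.factorial j) :=
            Nat.choose_le_pow_div j (d - 1)
        _ ≤ (d : ℝ) ^ j / (Nat.factorial j) := by
            gcongr
            exact_mod_cast Nat.sub_le d 1
    have hpow : (d : ℝ) ^ j = Real.exp ((j : ℝ) * Real.log d) := by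
      rw [← Real.exp_log hDpos, ← Real.exp_nat_mul, Real.log_exp]
    calc sigmaITerm d j m
        ≤ Real.exp (-(2 * m * j * (1 - 1 / d))) * (Nat.choose (d - 1) j : ℝ) := hcore
      _ ≤ Real.exp (-(2 * m * j * (1 - 1 / d))) * ((d : ℝ) ^ j / (Nat.factorial j)) :=
          mul_le_mul_of_nonneg_left hC (Real.exp_pos _).le
      _ = Real.exp (-(2 * m * j * (1 - 1 / d)) + j * Real.log d) / (Nat.factorial j) := by
          rw [hpow, Real.exp_add]; ring
  · intro ε hε
    refine ⟨max 1 (4 - 2 * Real.log (ε / 2)), fun c hc d hd2 => ?_⟩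
    have hc1 : (1 : ℝ) ≤ c := le_trans (le_max_left _ _) hc
    have hcpos : 0 < c := by linarith
    have hc4 : 4 - 2 * Real.log (ε / 2) ≤ c := le_trans (le_max_right _ _) hc
    have hD2 : (2 : ℝ) ≤ (d : ℝ) := by exact_mod_cast hd2
    have hd_inv : (1 : ℝ) / d ≤ 1 / 2 := by
      apply one_div_le_one_div_of_le <;> linarith
    set f : ℕ → ℝ :=
      fun k => Real.exp (-(c * (k + 1) * (1 - 1 / d)) + 2) / (Nat.factorial (k + 1)) with hf
    have hf_nonneg : ∀ k, 0 ≤ f k := fun k => by positivity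
    have hpt : ∀ k, f k ≤ Real.exp (-(c / 2) + 2) * (1 / 2 : ℝ) ^ k := by
      intro k
      have hk1 : (1 : ℝ) ≤ (k : ℝ) + 1 := by linarith [show (0:ℝ) ≤ (k:ℝ) from Nat.cast_nonneg k]
      have h1 : Real.exp (-(c * (k + 1) * (1 - 1 / d)) + 2) ≤ Real.exp (-(c / 2) + 2) := by
        apply Real.exp_le_exp.mpr
        have h5 : (1 : ℝ) / 2 ≤ ((k : ℝ) + 1) * (1 - 1 / d) := by
          have : (1 : ℝ) / 2 ≤ 1 - 1 / d := by linarith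
          nlinarith
        have : c / 2 ≤ c * (k + 1) * (1 - 1 / d) := by nlinarith
        linarith
      have h2 : ((2 : ℝ)) ^ k ≤ (Nat.factorial (k + 1) : ℝ) := by
        exact_mod_cast two_pow_le_fact k
      have h3 : (1 : ℝ) / (Nat.factorial (k + 1)) ≤ (1 / 2 : ℝ) ^ k := by
        rw [div_pow, one_pow]
        apply one_div_le_one_div_of_le (by positivity) h2
      calc f k = Real.exp (-(c * (k + 1) * (1 - 1 / d)) + 2) *
            (1 / (Nat.factorial (k + 1) : ℝ)) := by rw [hf]; ring
        _ ≤ Real.exp (-(c / 2) + 2) * (1 / 2 : ℝ) ^ k := by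
            apply mul_le_mul h1 h3 (by positivity) (Real.exp_pos _).le
    have hgeo : Summable (fun k : ℕ => Real.exp (-(c / 2) + 2) * (1 / 2 : ℝ) ^ k) :=
      (summable_geometric_of_lt_one (by norm_num) (by norm_num)).mul_left _
    have hf_sum : Summable f := Summable.of_nonneg_of_le hf_nonneg hpt hgeo
    have htsum : ∑' k, f k ≤ Real.exp (-(c / 2) + 2) * 2 := by
      calc ∑' k, f k ≤ ∑' k, Real.exp (-(c / 2) + 2) * (1 / 2 : ℝ) ^ k :=
            hf_sum.tsum_le_tsum hpt hgeo
        _ = Real.exp (-(c / 2) + 2) * 2 := by rw [tsum_mul_left, tsum_geometric_two]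
    have hfinal : Real.exp (-(c / 2) + 2) * 2 ≤ ε := by
      have h1 : Real.exp (-(c / 2) + 2) ≤ Real.exp (Real.log (ε / 2)) := by
        apply Real.exp_le_exp.mpr; linarith
      rw [Real.exp_log (by linarith : (0:ℝ) < ε / 2)] at h1
      linarith
    calc ∑ j ∈ (Finset.Icc 2 (d - 1)).filter (fun j => Even j),
          sigmaITerm d j ((Real.log d + c) / 2)
        ≤ ∑' k, f k := sum_sigmaI_le_tsum d hd2 c hcpos
      _ ≤ Real.exp (-(c / 2) + 2) * 2 := htsum
      _ ≤ ε := hfinal
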